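/- Let N_1 and N_2 be nonzero nonnegative 2×…×2 tensors of dimension n−2 (n ≥ 4). Suppose that for every bipartition (A,B) of {3,…,n}, the block-diagonal matrix with blocks the A|B flattenings of N_1 and N_2 has rank at most 2. Then each N_i has all its flattening ranks equal to 1, hence each N_i is a rank-one tensor (an outer product of nonnegative vectors). -/
import Mathlib

open Finset

/-- The A|B flattening of a 2×…×2 tensor, for a bipartition given by a subset
A of the index set (B is the complement). -/
def flattenAB {m : ℕ} (N : (Fin m → Fin 2) → ℝ) (A : Finset (Fin m)) :
    Matrix ({x : Fin m // x ∈ A} → Fin 2) ({x : Fin m // x ∉ A} → Fin 2) ℝ :=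
  Matrix.of fun ρ γ =>
    N (fun r => if h : r ∈ A then ρ ⟨r, h⟩ else γ ⟨r, h⟩)

lemma rank_submatrix_le' {k k' l l' : Type} [Fintype k] [Fintype k'] [Fintype l] [Fintype l']
    [DecidableEq k']
    (A : Matrix k k' ℝ) (f : l → k) (g : l' → k') (hg : Function.Injective g) :
    (A.submatrix f g).rank ≤ A.rank := by
  have hcomp : (A.submatrix f g).mulVecLin
      = LinearMap.funLeft ℝ ℝ f ∘ₗ A.mulVecLin ∘ₗ
        (Function.ExtendByZero.linearMap ℝ g : (l' → ℝ) →ₗ[ℝ] k' → ℝ) := by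
    ext v i
    simp only [LinearMap.coe_comp, Function.comp_apply, Matrix.mulVecLin_apply,
      LinearMap.funLeft_apply, Function.ExtendByZero.linearMap_apply]
    rw [Matrix.mulVec, Matrix.mulVec]
    show ∑ x, A (f i) (g x) * v x = ∑ jj, A (f i) jj * Function.extend g v 0 jj
    have h0 : ∀ jj ∈ Finset.univ, jj ∉ Finset.univ.image g →
        A (f i) jj * Function.extend g v 0 jj = 0 := by
      intro jj _ hj
      rw [Function.extend_apply']
      · simp
      · rintro ⟨a, rfl⟩
        exact hj (Finset.mem_image_of_mem g (Finset.mem_univ a))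
    rw [← Finset.sum_subset (Finset.subset_univ _) h0,
      Finset.sum_image (fun x _ y _ h => hg h)]
    refine Finset.sum_congr rfl fun x _ => ?_
    rw [hg.extend_apply]
  rw [Matrix.rank, hcomp, LinearMap.range_comp]
  refine le_trans (Submodule.finrank_map_le _ _) ?_
  rw [Matrix.rank]
  exact Submodule.finrank_mono (LinearMap.range_comp_le_range _ _)

lemma one_le_rank_of_entry {k l : Type} [Fintype k] [Fintype l] [DecidableEq l]
    (A : Matrix k l ℝ) (a : k) (b : l) (h : A a b ≠ 0) : 1 ≤ A.rank := by
  rw [Matrix.rank, Nat.succ_le_iff, Module.finrank_pos_iff_exists_ne_zero]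
  refine ⟨⟨A.mulVec (Pi.single b 1), ⟨Pi.single b 1, rfl⟩⟩, ?_⟩
  intro hzero
  apply h
  have := congrArg (fun w : LinearMap.range A.mulVecLin => (w : k → ℝ) a) hzero
  simpa [Matrix.mulVec_single] using this

lemma rank_le_one_of_factor {k l : Type} [Fintype k] [Fintype l]
    (A : Matrix k l ℝ) (u : k → ℝ) (w : l → ℝ) (h : ∀ a b, A a b = u a * w b) :
    A.rank ≤ 1 := by
  have hA : A = (Matrix.of fun a (_ : Unit) => u a) * (Matrix.of fun (_ : Unit) b => w b) := by
    ext a b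
    simp [Matrix.mul_apply, h]
  rw [hA]
  exact le_trans (Matrix.rank_mul_le_left _ _)
    (le_trans (Matrix.rank_le_card_width _) (by simp))

theorem stmt_19 {m : ℕ} (hm : 2 ≤ m)
    (N : Fin 2 → (Fin m → Fin 2) → ℝ)
    (hnn : ∀ c i, 0 ≤ N c i) (hne : ∀ c, N c ≠ 0)
    (hrank : ∀ A : Finset (Fin m),
      (Matrix.of fun (x : Fin 2 × ({y : Fin m // y ∈ A} → Fin 2))
          (z : Fin 2 × ({y : Fin m // y ∉ A} → Fin 2)) =>
          if x.1 = z.1 then flattenAB (N x.1) A x.2 z.2 else 0).rank ≤ 2) :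
    ∀ c : Fin 2,
      (∀ A : Finset (Fin m), (flattenAB (N c) A).rank = 1) ∧
      ∃ v : Fin m → Fin 2 → ℝ, (∀ r s, 0 ≤ v r s) ∧
        ∀ i, N c i = ∏ r, v r (i r) := by
  have hcne : ∀ c : Fin 2, c ≠ (if c = 0 then 1 else 0) := by decide
  have hex : ∀ c : Fin 2, ∃ i, N c i ≠ 0 := fun c => Function.ne_iff.mp (hne c)
  have hentry : ∀ (c : Fin 2) (A : Finset (Fin m)) (i : Fin m → Fin 2),
      flattenAB (N c) A (fun x => i x.1) (fun x => i x.1) = N c i := by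
    intro c A i
    simp only [flattenAB, Matrix.of_apply]
    congr 1
    funext r
    split <;> rfl
  -- all 2×2 minors of each flattening vanish
  have key : ∀ (c : Fin 2) (A : Finset (Fin m)) ρ ρ' γ γ',
      flattenAB (N c) A ρ γ * flattenAB (N c) A ρ' γ'
        = flattenAB (N c) A ρ γ' * flattenAB (N c) A ρ' γ := by
    intro c A ρ ρ' γ γ'
    by_cases hγ : γ = γ'
    · subst hγ; ring
    by_contra hmin
    set c' : Fin 2 := if c = 0 then 1 else 0 with hc'
    have hcc : c ≠ c' := hcne c
    obtain ⟨i', hi'⟩ := hex c'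
    have he : flattenAB (N c') A (fun x => i' x.1) (fun x => i' x.1) ≠ 0 := by
      rw [hentry]; exact hi'
    set B := (Matrix.of fun (x : Fin 2 × ({y : Fin m // y ∈ A} → Fin 2))
          (z : Fin 2 × ({y : Fin m // y ∉ A} → Fin 2)) =>
          if x.1 = z.1 then flattenAB (N x.1) A x.2 z.2 else 0) with hB
    set fr : Fin 3 → Fin 2 × ({y : Fin m // y ∈ A} → Fin 2) :=
      ![(c, ρ), (c, ρ'), (c', fun x => i' x.1)] with hfr
    set fc : Fin 3 → Fin 2 × ({y : Fin m // y ∉ A} → Fin 2) :=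
      ![(c, γ), (c, γ'), (c', fun x => i' x.1)] with hfcdef
    have hfc : Function.Injective fc := by
      intro x y hxy
      fin_cases x <;> fin_cases y <;> simp_all [hfcdef, Prod.ext_iff] <;> tauto
    have hdet : (B.submatrix fr fc).det
        = (flattenAB (N c) A ρ γ * flattenAB (N c) A ρ' γ'
            - flattenAB (N c) A ρ γ' * flattenAB (N c) A ρ' γ)
          * flattenAB (N c') A (fun x => i' x.1) (fun x => i' x.1) := by
      rw [Matrix.det_fin_three]
      simp only [Matrix.submatrix_apply, hfr, hfcdef, hB, Matrix.of_apply,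
        Matrix.cons_val_zero, Matrix.cons_val_one, Matrix.head_cons, Matrix.cons_val_two,
        Matrix.tail_cons, if_pos rfl, if_neg hcc, if_neg (Ne.symm hcc), if_true]
      ring
    have hdet0 : (B.submatrix fr fc).det ≠ 0 :=
      hdet ▸ mul_ne_zero (sub_ne_zero_of_ne hmin) he
    have h3 : (B.submatrix fr fc).rank = 3 := by
      rw [Matrix.rank_of_isUnit _ ((Matrix.isUnit_iff_isUnit_det _).mpr
        (isUnit_iff_ne_zero.mpr hdet0))]
      simp
    have hle := rank_submatrix_le' B fr fc hfc
    have h2 := hrank A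
    rw [← hB] at h2
    omega
  -- exchange identity on the tensor
  have exch : ∀ (c : Fin 2) (A : Finset (Fin m)) (j j' : Fin m → Fin 2),
      N c j * N c j' = N c (fun r => if r ∈ A then j r else j' r)
        * N c (fun r => if r ∈ A then j' r else j r) := by
    intro c A j j'
    have hent2 : ∀ (a b : Fin m → Fin 2),
        flattenAB (N c) A (fun x => a x.1) (fun x => b x.1)
          = N c (fun r => if r ∈ A then a r else b r) := by
      intro a b
      simp only [flattenAB, Matrix.of_apply]
      refine congrArg (N c) (funext fun r => ?_)
      by_cases h : r ∈ A <;> simp [h]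
    have hk := key c A (fun x => j x.1) (fun x => j' x.1) (fun x => j x.1) (fun x => j' x.1)
    rw [hent2, hent2, hent2, hent2] at hk
    simpa using hk
  -- each flattening has rank exactly 1
  have hrank1 : ∀ (c : Fin 2) (A : Finset (Fin m)), (flattenAB (N c) A).rank = 1 := by
    intro c A
    obtain ⟨i0, hi0⟩ := hex c
    have he : flattenAB (N c) A (fun x => i0 x.1) (fun x => i0 x.1) ≠ 0 := by
      rw [hentry]; exact hi0
    have hlow := one_le_rank_of_entry _ _ _ he
    have hup : (flattenAB (N c) A).rank ≤ 1 := by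
      refine rank_le_one_of_factor _ (fun a => flattenAB (N c) A a (fun x => i0 x.1))
        (fun b => flattenAB (N c) A (fun x => i0 x.1) b
          / flattenAB (N c) A (fun x => i0 x.1) (fun x => i0 x.1)) ?_
      intro a b
      have hk := key c A a (fun x => i0 x.1) b (fun x => i0 x.1)
      field_simp
      linear_combination hk
    omega
  intro c
  refine ⟨hrank1 c, ?_⟩
  obtain ⟨p, hp0⟩ := hex c
  have hp : 0 < N c p := (hnn c p).lt_of_ne (Ne.symm hp0)
  have hpne : N c p ≠ 0 := ne_of_gt hp
  have h0m : 0 < m := by omega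
  refine ⟨fun r s => N c (Function.update p r s)
      * (if r = (⟨0, h0m⟩ : Fin m) then ((N c p) ^ (m - 1))⁻¹ else 1), ?_, ?_⟩
  · intro r s
    apply mul_nonneg (hnn _ _)
    split
    · positivity
    · norm_num
  intro i
  have main : ∀ k, k ≤ m → N c (fun r => if (r : ℕ) < k then i r else p r) * (N c p) ^ k
      = N c p * ∏ r ∈ univ.filter (fun r : Fin m => (r : ℕ) < k),
          N c (Function.update p r (i r)) := by
    intro k
    induction k with
    | zero => intro _; simp
    | succ k ih =>
      intro hk1
      have hk : k < m := hk1
      have ihk := ih (le_of_lt hk)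
      have hstep := exch c (univ.filter (fun r : Fin m => (r : ℕ) < k))
          (fun r => if (r : ℕ) < k + 1 then i r else p r) p
      have hmix1 : (fun r => if r ∈ univ.filter (fun r : Fin m => (r : ℕ) < k) then
          (fun r : Fin m => if (r : ℕ) < k + 1 then i r else p r) r else p r)
          = fun r : Fin m => if (r : ℕ) < k then i r else p r := by
        funext r
        simp only [mem_filter, mem_univ, true_and]
        by_cases h : (r : ℕ) < k
        · simp [h, Nat.lt_succ_of_lt h]
        · simp [h]
      have hmix2 : (fun r => if r ∈ univ.filter (fun r : Fin m => (r : ℕ) < k) then p r else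
          (fun r : Fin m => if (r : ℕ) < k + 1 then i r else p r) r)
          = Function.update p ⟨k, hk⟩ (i ⟨k, hk⟩) := by
        funext r
        simp only [mem_filter, mem_univ, true_and, Function.update_apply]
        by_cases h : (r : ℕ) < k
        · have hne' : r ≠ ⟨k, hk⟩ := by
            intro hr
            rw [hr] at h
            exact lt_irrefl k h
          simp [h, hne']
        · by_cases h2 : (r : ℕ) < k + 1
          · have hre : r = ⟨k, hk⟩ := Fin.ext (show (r : ℕ) = k by omega)
            simp [h, h2, hre]
          · have hne' : r ≠ ⟨k, hk⟩ := by
              intro hr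
              rw [hr] at h2
              exact h2 (Nat.lt_succ_self k)
            simp [h, h2, hne']
      rw [hmix1, hmix2] at hstep
      have hfilter : univ.filter (fun r : Fin m => (r : ℕ) < k + 1)
          = insert (⟨k, hk⟩ : Fin m) (univ.filter (fun r : Fin m => (r : ℕ) < k)) := by
        ext r
        simp only [mem_filter, mem_insert, mem_univ, true_and]
        constructor
        · intro h
          by_cases h2 : (r : ℕ) < k
          · exact Or.inr h2
          · exact Or.inl (Fin.ext (show (r : ℕ) = k by omega))
        · rintro (rfl | h)
          · exact Nat.lt_succ_self k
          · omega
      have hnotmem : (⟨k, hk⟩ : Fin m) ∉ univ.filter (fun r : Fin m => (r : ℕ) < k) := by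
        simp
      rw [hfilter, Finset.prod_insert hnotmem, pow_succ]
      calc N c (fun r : Fin m => if (r : ℕ) < k + 1 then i r else p r) * ((N c p) ^ k * N c p)
          = (N c (fun r : Fin m => if (r : ℕ) < k + 1 then i r else p r) * N c p)
            * (N c p) ^ k := by ring
        _ = (N c (fun r : Fin m => if (r : ℕ) < k then i r else p r)
            * N c (Function.update p ⟨k, hk⟩ (i ⟨k, hk⟩))) * (N c p) ^ k := by rw [hstep]
        _ = N c (Function.update p ⟨k, hk⟩ (i ⟨k, hk⟩))
            * (N c (fun r : Fin m => if (r : ℕ) < k then i r else p r) * (N c p) ^ k) := by ring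
        _ = N c (Function.update p ⟨k, hk⟩ (i ⟨k, hk⟩))
            * (N c p * ∏ r ∈ univ.filter (fun r : Fin m => (r : ℕ) < k),
                N c (Function.update p r (i r))) := by rw [ihk]
        _ = N c p * (N c (Function.update p ⟨k, hk⟩ (i ⟨k, hk⟩))
            * ∏ r ∈ univ.filter (fun r : Fin m => (r : ℕ) < k),
                N c (Function.update p r (i r))) := by ring
  have hm' := main m le_rfl
  have hmixm : (fun r : Fin m => if (r : ℕ) < m then i r else p r) = i := by
    funext r; simp [r.isLt]
  have hfiltm : univ.filter (fun r : Fin m => (r : ℕ) < m) = univ := by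
    ext r; simp [r.isLt]
  rw [hmixm, hfiltm] at hm'
  have hmm : m - 1 + 1 = m := by omega
  have hpow : (N c p) ^ m = (N c p) ^ (m - 1) * N c p := by rw [← pow_succ, hmm]
  have hprod : ∏ r, N c (Function.update p r (i r)) = N c i * (N c p) ^ (m - 1) := by
    have h3 : N c p * (N c i * (N c p) ^ (m - 1))
        = N c p * ∏ r, N c (Function.update p r (i r)) := by
      rw [← hm', hpow]; ring
    exact (mul_left_cancel₀ hpne h3).symm
  rw [Finset.prod_mul_distrib, hprod]
  have hite : (∏ r : Fin m, if r = (⟨0, h0m⟩ : Fin m) then ((N c p) ^ (m - 1))⁻¹ else 1)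
      = ((N c p) ^ (m - 1))⁻¹ := by
    rw [Finset.prod_ite_eq' Finset.univ (⟨0, h0m⟩ : Fin m)
      (fun _ => ((N c p) ^ (m - 1))⁻¹)]
    simp
  rw [hite, mul_assoc, mul_inv_cancel₀ (pow_ne_zero _ hpne), mul_one]
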